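/- Let φ : M → N be a continuous group homomorphism of Polish Abelian groups. If the quotient group N/φ(M) is countable, then the image φ(M) is both open and closed in N, and hence N/φ(M) with the quotient topology is discrete. -/

import Mathlib

open Filter Metric Set Topology

/-- Alexandrov: the range of an embedding of a complete metric space into a metric
space is a Gδ set. -/
lemma aux_isGδ_range {X Y : Type*} [MetricSpace X] [MetricSpace Y] [CompleteSpace Y]
    (f : Y → X) (hf : Topology.IsEmbedding f) : IsGδ (Set.range f) := by
  have key : ∀ (x : Y) (n : ℕ), ∃ ρ : ℝ, 0 < ρ ∧ ρ ≤ 1 / (n + 1) ∧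
      ∀ y : Y, f y ∈ ball (f x) ρ → dist y x < 1 / (n + 1) := by
    intro x n
    have hpos : (0 : ℝ) < 1 / (n + 1) := by positivity
    have hb : ball x (1 / (n + 1)) ∈ 𝓝 x := ball_mem_nhds _ hpos
    rw [hf.toIsInducing.nhds_eq_comap, Filter.mem_comap] at hb
    obtain ⟨t, ht, hsub⟩ := hb
    obtain ⟨ρ₀, hρ₀, hball⟩ := Metric.mem_nhds_iff.1 ht
    refine ⟨min ρ₀ (1 / (n + 1)), by positivity, min_le_right _ _, fun y hy => ?_⟩
    have hyt : f y ∈ t := hball (mem_ball.2 (lt_of_lt_of_le (mem_ball.1 hy) (min_le_left _ _)))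
    exact hsub hyt
  choose r hr_pos hr_le hr_spec using key
  have hrange : Set.range f = ⋂ n : ℕ, ⋃ x : Y, ball (f x) (r x n) := by
    apply Set.Subset.antisymm
    · rintro _ ⟨y, rfl⟩
      exact Set.mem_iInter.2 fun n => Set.mem_iUnion.2 ⟨y, mem_ball_self (hr_pos y n)⟩
    · intro p hp
      rw [Set.mem_iInter] at hp
      have hx : ∀ n : ℕ, ∃ x : Y, p ∈ ball (f x) (r x n) := fun n => Set.mem_iUnion.1 (hp n)
      choose x hxp using hx
      -- f (x n) → p
      have hconv : Tendsto (fun n => f (x n)) atTop (𝓝 p) := by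
        rw [Metric.tendsto_atTop]
        intro ε hε
        obtain ⟨N, hN⟩ := exists_nat_one_div_lt hε
        refine ⟨N, fun m hm => ?_⟩
        have h1 : dist (f (x m)) p < r (x m) m := by
          have := hxp m; rwa [mem_ball, dist_comm] at this
        have h2 : r (x m) m ≤ 1 / (m + 1) := hr_le _ _
        have h3 : (1 : ℝ) / (m + 1) ≤ 1 / (N + 1) := by
          apply one_div_le_one_div_of_le (by positivity)
          exact_mod_cast by omega
        linarith
      -- a little helper: if f (x m) is close enough to p then x m is close to x n
      have hclose : ∀ n m : ℕ, dist (f (x m)) p < r (x n) n - dist p (f (x n)) →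
          dist (x m) (x n) < 1 / (n + 1) := by
        intro n m h
        apply hr_spec (x n) n (x m)
        rw [mem_ball]
        calc dist (f (x m)) (f (x n)) ≤ dist (f (x m)) p + dist p (f (x n)) := dist_triangle _ _ _
          _ < r (x n) n := by linarith
      -- (x n) is Cauchy
      have hcauchy : CauchySeq x := by
        rw [Metric.cauchySeq_iff]
        intro ε hε
        obtain ⟨n, hn⟩ := exists_nat_one_div_lt (show (0:ℝ) < ε / 2 by linarith)
        have hslack : 0 < r (x n) n - dist p (f (x n)) := by
          have := hxp n; rw [mem_ball] at this; linarith
        obtain ⟨N, hN⟩ := Metric.tendsto_atTop.1 hconv _ hslack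
        refine ⟨N, fun a ha b hb => ?_⟩
        have ha' := hclose n a (hN a ha)
        have hb' := hclose n b (hN b hb)
        calc dist (x a) (x b) ≤ dist (x a) (x n) + dist (x n) (x b) := dist_triangle _ _ _
          _ < 1 / (n + 1) + 1 / (n + 1) := by rw [dist_comm (x n)]; linarith
          _ < ε := by linarith
      obtain ⟨ξ, hξ⟩ := cauchySeq_tendsto_of_complete hcauchy
      have : Tendsto (fun n => f (x n)) atTop (𝓝 (f ξ)) := (hf.continuous.tendsto ξ).comp hξ
      exact ⟨ξ, (tendsto_nhds_unique this hconv).symm ▸ rfl⟩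
  rw [hrange]
  exact .iInter fun n => (isOpen_iUnion fun x => isOpen_ball).isGδ

open UniformSpace in
/-- A Polish abelian uniform group is complete. -/
lemma aux_completeSpace {G : Type*} [AddCommGroup G] [UniformSpace G] [IsUniformAddGroup G]
    [hpol : PolishSpace G] : CompleteSpace G := by
  haveI : (uniformity G).IsCountablyGenerated := by
    rw [uniformity_eq_comap_nhds_zero G]
    infer_instance
  letI : PseudoMetricSpace G := UniformSpace.pseudoMetricSpace G
  -- the completion
  set C := Completion G
  have hue : IsUniformEmbedding ((↑) : G → C) := Completion.isUniformEmbedding_coe G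
  -- the range of the coercion is a Polish subspace
  have hPol : PolishSpace (Set.range ((↑) : G → C)) := by
    have e : G ≃ₜ Set.range ((↑) : G → C) :=
      (hue.isEmbedding.toHomeomorph)
    exact e.symm.isClosedEmbedding.polishSpace
  have hGδ : IsGδ (Set.range ((↑) : G → C)) := by
    obtain ⟨m, hm_topo, hm_complete⟩ := hpol.complete
    have hemb : @Topology.IsEmbedding G C m.toUniformSpace.toTopologicalSpace _ ((↑)) := by
      rw [hm_topo]; exact hue.isEmbedding
    exact @aux_isGδ_range C G _ m hm_complete _ hemb
  have hdense : Dense (Set.range ((↑) : G → C)) := Completion.denseRange_coe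
  have hres : Set.range ((↑) : G → C) ∈ residual C := residual_of_dense_Gδ hGδ hdense
  -- the range is a subgroup; a residual subgroup is everything
  have hsurj : ∀ z : C, z ∈ Set.range ((↑) : G → C) := by
    intro z
    have hres2 : (fun w => z + w) '' Set.range ((↑) : G → C) ∈ residual C := by
      have hmap := (Homeomorph.addLeft z).residual_map_eq
      rw [← hmap, Filter.mem_map]
      have : (Homeomorph.addLeft z) ⁻¹' ((fun w => z + w) '' Set.range ((↑) : G → C))
          = Set.range ((↑) : G → C) := by
        apply Set.preimage_image_eq _ (add_right_injective z)
      rwa [this]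
    have hint : (Set.range ((↑) : G → C) ∩
        ((fun w => z + w) '' Set.range ((↑) : G → C))).Nonempty := by
      have : Set.range ((↑) : G → C) ∩ ((fun w => z + w) '' Set.range ((↑) : G → C))
          ∈ residual C := Filter.inter_mem hres hres2
      have hdense2 := dense_of_mem_residual this
      exact hdense2.nonempty
    obtain ⟨w, ⟨⟨g₁, hg₁⟩, ⟨w', ⟨g₂, hg₂⟩, hw'⟩⟩⟩ := hint
    refine ⟨g₁ - g₂, ?_⟩
    show ((g₁ - g₂ : G) : Completion G) = z
    rw [UniformSpace.Completion.coe_sub, hg₁, hg₂, ← hw']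
    exact add_sub_cancel_right z w'
  have : Set.range ((↑) : G → C) = Set.univ := Set.eq_univ_iff_forall.2 hsurj
  rw [completeSpace_iff_isComplete_range hue.isUniformInducing, this]
  exact completeSpace_iff_isComplete_univ.1 (inferInstance : CompleteSpace (Completion G))

/-- Baire category step: the closure of the image of any neighborhood of `0` is a
neighborhood of `0` in `N`. -/
lemma aux_closure_image_mem_nhds {M N : Type*}
    [AddCommGroup M] [TopologicalSpace M] [IsTopologicalAddGroup M] [PolishSpace M]
    [AddCommGroup N] [TopologicalSpace N] [IsTopologicalAddGroup N] [PolishSpace N]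
    (φ : M →+ N) (hφ : Continuous φ)
    (hcount : Countable (N ⧸ φ.range)) {U : Set M} (hU : U ∈ 𝓝 0) :
    closure (φ '' U) ∈ 𝓝 (0 : N) := by
  letI := TopologicalSpace.upgradeIsCompletelyMetrizable N
  -- find an open neighborhood V of 0 with V - V ⊆ U
  obtain ⟨W, hW, hWU⟩ : ∃ W ∈ 𝓝 (0 : M), ∀ a ∈ W, ∀ b ∈ W, a - b ∈ U := by
    have hc : Tendsto (fun p : M × M => p.1 - p.2) (𝓝 (0, 0)) (𝓝 (0 : M)) := by
      have := (continuous_sub (G := M)).tendsto ((0 : M), (0 : M))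
      simpa using this
    rw [nhds_prod_eq] at hc
    have := hc hU
    rw [Filter.mem_map, Filter.mem_prod_iff] at this
    obtain ⟨W₁, hW₁, W₂, hW₂, hsub⟩ := this
    exact ⟨W₁ ∩ W₂, Filter.inter_mem hW₁ hW₂,
      fun a ha b hb => hsub (Set.mk_mem_prod ha.1 hb.2)⟩
  set V : Set M := interior W with hV
  have hVopen : IsOpen V := isOpen_interior
  have hV0 : (0 : M) ∈ V := mem_interior_iff_mem_nhds.2 hW
  have hVU : ∀ a ∈ V, ∀ b ∈ V, a - b ∈ U := fun a ha b hb =>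
    hWU a (interior_subset ha) b (interior_subset hb)
  -- countable dense set in M
  obtain ⟨D, hDc, hDdense⟩ := TopologicalSpace.exists_countable_dense M
  haveI : Countable D := hDc.to_subtype
  -- translates of closure (φ '' V) cover N
  set t : (N ⧸ φ.range) × D → N := fun p => Quotient.out p.1 + φ (p.2 : M) with ht
  set F : (N ⧸ φ.range) × D → Set N := fun p => closure ((t p + ·) '' (φ '' V)) with hF
  have hcover : ⋃ p, F p = Set.univ := by
    apply Set.eq_univ_iff_forall.2
    intro y
    have hy : y - Quotient.out (QuotientAddGroup.mk (s := φ.range) y) ∈ φ.range := by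
      have h1 : QuotientAddGroup.mk (s := φ.range)
          (Quotient.out (QuotientAddGroup.mk (s := φ.range) y)) = QuotientAddGroup.mk y :=
        Quotient.out_eq _
      rwa [QuotientAddGroup.eq_iff_sub_mem, AddSubgroup.sub_mem_comm_iff] at h1
    obtain ⟨m, hm⟩ := hy
    -- find d ∈ D with m - d ∈ V
    have : (((fun v => m - v) '' V) ∩ D).Nonempty := by
      apply hDdense.inter_open_nonempty
      · exact (Homeomorph.subLeft m).isOpenMap _ hVopen
      · exact ⟨m, 0, hV0, by simp⟩
    obtain ⟨d, ⟨v, hvV, hdv⟩, hdD⟩ := this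
    refine Set.mem_iUnion.2 ⟨(QuotientAddGroup.mk y, ⟨d, hdD⟩), subset_closure ?_⟩
    refine ⟨φ v, ⟨v, hvV, rfl⟩, ?_⟩
    have hmdv : m = d + v := by
      have : d = m - v := hdv.symm
      rw [this]; abel
    show Quotient.out (QuotientAddGroup.mk (s := φ.range) y) + φ d + φ v = y
    have : φ d + φ v = φ m := by rw [← map_add, ← hmdv]
    rw [add_assoc, this, hm]
    abel
  -- by Baire, one translate has nonempty interior
  obtain ⟨p, hp⟩ : ∃ p, (interior (F p)).Nonempty := by
    apply nonempty_interior_of_iUnion_of_closed (fun p => isClosed_closure)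
    exact hcover
  -- hence closure (φ '' V) has nonempty interior
  have hint : (interior (closure (φ '' V))).Nonempty := by
    have he : F p = (Homeomorph.addLeft (t p)) '' closure (φ '' V) := by
      show closure ((fun x => t p + x) '' (φ '' V)) = _
      rw [Homeomorph.image_closure]
      rfl
    rw [he, ← Homeomorph.image_interior] at hp
    exact hp.of_image
  obtain ⟨w, hw⟩ := hint
  -- conclude
  have hsub : (fun z => z - w) '' interior (closure (φ '' V)) ⊆ closure (φ '' U) := by
    rintro _ ⟨z, hz, rfl⟩
    have hz' : z ∈ closure (φ '' V) := interior_subset hz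
    have hw' : w ∈ closure (φ '' V) := interior_subset hw
    have : ∀ a ∈ φ '' V, ∀ b ∈ φ '' V, a - b ∈ φ '' U := by
      rintro _ ⟨va, hva, rfl⟩ _ ⟨vb, hvb, rfl⟩
      exact ⟨va - vb, hVU va hva vb hvb, map_sub φ va vb⟩
    exact map_mem_closure₂ continuous_sub hz' hw' this
  rw [_root_.mem_nhds_iff]
  refine ⟨_, hsub, (Homeomorph.subRight w).isOpenMap _ isOpen_interior, ⟨w, hw, sub_self w⟩⟩

/-- The range of `φ` is a neighborhood of `0`. -/
lemma aux_range_mem_nhds {M N : Type*}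
    [AddCommGroup M] [TopologicalSpace M] [IsTopologicalAddGroup M] [PolishSpace M]
    [AddCommGroup N] [TopologicalSpace N] [IsTopologicalAddGroup N] [PolishSpace N]
    (φ : M →+ N) (hφ : Continuous φ)
    (hcount : Countable (N ⧸ φ.range)) :
    Set.range φ ∈ 𝓝 (0 : N) := by
  letI : UniformSpace M := IsTopologicalAddGroup.rightUniformSpace M
  haveI : IsUniformAddGroup M := isUniformAddGroup_of_addCommGroup
  haveI : CompleteSpace M := aux_completeSpace
  letI := TopologicalSpace.upgradeIsCompletelyMetrizable N
  -- an antitone basis of neighborhoods of 0 in M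
  obtain ⟨b, hb⟩ := (𝓝 (0 : M)).exists_antitone_basis
  -- construction of the sequence of neighborhoods Wa
  have hstep : ∀ A : {A : Set M // A ∈ 𝓝 0}, ∀ k : ℕ, ∃ B : Set M, B ∈ 𝓝 (0 : M) ∧
      B ⊆ b k ∧ (∀ p ∈ B, -p ∈ B) ∧ ∀ p ∈ B, ∀ q ∈ B, p + q ∈ A.1 := by
    intro A k
    have hc : Tendsto (fun p : M × M => p.1 + p.2) (𝓝 (0, 0)) (𝓝 (0 : M)) := by
      have := (continuous_add (M := M)).tendsto ((0 : M), (0 : M))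
      simpa using this
    rw [nhds_prod_eq] at hc
    have := hc A.2
    rw [Filter.mem_map, Filter.mem_prod_iff] at this
    obtain ⟨W₁, hW₁, W₂, hW₂, hsub⟩ := this
    set B₀ : Set M := W₁ ∩ W₂ ∩ b k with hB₀
    have hB₀_mem : B₀ ∈ 𝓝 (0 : M) :=
      Filter.inter_mem (Filter.inter_mem hW₁ hW₂) (hb.mem k)
    refine ⟨B₀ ∩ (fun p : M => -p) ⁻¹' B₀,
      Filter.inter_mem hB₀_mem ?_, fun p hp => hp.1.2, fun p hp => ⟨hp.2, by simpa using hp.1⟩,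
      fun p hp q hq => hsub (Set.mk_mem_prod hp.1.1.1 hq.1.1.2)⟩
    have hcont : Tendsto (fun p : M => -p) (𝓝 0) (𝓝 (0 : M)) := by
      have := (continuous_neg (G := M)).tendsto (0 : M)
      simpa using this
    exact hcont hB₀_mem
  choose g hg_mem hg_basis hg_neg hg_add using hstep
  set Wa : ℕ → {A : Set M // A ∈ 𝓝 0} :=
    fun n => Nat.rec ⟨Set.univ, Filter.univ_mem⟩ (fun k ih => ⟨g ih k, hg_mem ih k⟩) n with hWa
  have hWa_basis : ∀ k, (Wa (k + 1)).1 ⊆ b k := fun k => hg_basis _ _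
  have hWa_neg : ∀ k, ∀ p ∈ (Wa (k + 1)).1, -p ∈ (Wa (k + 1)).1 := fun k => hg_neg _ _
  have hWa_add : ∀ k, ∀ p ∈ (Wa (k + 1)).1, ∀ q ∈ (Wa (k + 1)).1, p + q ∈ (Wa k).1 :=
    fun k => hg_add _ _
  have hWa_zero : ∀ k, (0 : M) ∈ (Wa k).1 := fun k => mem_of_mem_nhds (Wa k).2
  have hWa_mono : ∀ k, (Wa (k + 1)).1 ⊆ (Wa k).1 := by
    intro k p hp
    have := hWa_add k p hp 0 (hWa_zero (k + 1))
    simpa using this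
  have hWa_anti : ∀ {i j : ℕ}, i ≤ j → (Wa j).1 ⊆ (Wa i).1 := by
    intro i j hij
    induction j, hij using Nat.le_induction with
    | base => exact subset_rfl
    | succ j hij ih => exact (hWa_mono j).trans ih
  -- Step A applied to each Wa k
  have hcl : ∀ k, closure (φ '' (Wa k).1) ∈ 𝓝 (0 : N) :=
    fun k => aux_closure_image_mem_nhds φ hφ hcount (Wa k).2
  -- main claim
  have hkey : closure (φ '' (Wa 1).1) ⊆ Set.range φ := by
    intro y hy
    -- one-step approximation
    have hstep2 : ∀ (n : ℕ) (z : N), z ∈ closure (φ '' (Wa (n + 1)).1) →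
        ∃ m : M, m ∈ (Wa (n + 1)).1 ∧ z - φ m ∈ closure (φ '' (Wa (n + 2)).1) := by
      intro n z hz
      have hnb : {w : N | z - w ∈ closure (φ '' (Wa (n + 2)).1)} ∈ 𝓝 z := by
        have hc : Tendsto (fun w : N => z - w) (𝓝 z) (𝓝 (0 : N)) := by
          have := (continuous_sub_left z : Continuous fun w : N => z - w).tendsto z
          rwa [sub_self] at this
        exact hc (hcl (n + 2))
      obtain ⟨w, hw1, hw2⟩ := mem_closure_iff_nhds.1 hz _ hnb
      obtain ⟨m, hm, rfl⟩ := hw2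
      exact ⟨m, hm, hw1⟩
    -- the recursive construction of partial sums
    let S : ℕ → Type _ := fun n => {p : M × M //
      p.2 ∈ (Wa (n + 1)).1 ∧ y - φ p.1 ∈ closure (φ '' (Wa (n + 2)).1)}
    let init : S 0 :=
      ⟨((hstep2 0 y hy).choose, (hstep2 0 y hy).choose),
        (hstep2 0 y hy).choose_spec.1, (hstep2 0 y hy).choose_spec.2⟩
    let step : ∀ n, S n → S (n + 1) := fun n s =>
      ⟨(s.1.1 + (hstep2 (n + 1) (y - φ s.1.1) s.2.2).choose,
        (hstep2 (n + 1) (y - φ s.1.1) s.2.2).choose),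
        (hstep2 (n + 1) (y - φ s.1.1) s.2.2).choose_spec.1, by
          have h := (hstep2 (n + 1) (y - φ s.1.1) s.2.2).choose_spec.2
          have heq : y - φ (s.1.1 + (hstep2 (n + 1) (y - φ s.1.1) s.2.2).choose)
              = y - φ s.1.1 - φ ((hstep2 (n + 1) (y - φ s.1.1) s.2.2).choose) := by
            rw [map_add]; abel
          rw [heq]
          exact h⟩
    let seq : ∀ n, S n := fun n => Nat.rec init step n
    let x : ℕ → M := fun n => (seq n).1.1
    have hrec : ∀ n, x (n + 1) = x n + (seq (n + 1)).1.2 := fun n => rfl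
    have hx_inc : ∀ n, x (n + 1) - x n ∈ (Wa (n + 2)).1 := by
      intro n
      have h2 := (seq (n + 1)).2.1
      rw [hrec n]
      simpa using h2
    have hx_rem : ∀ n, y - φ (x n) ∈ closure (φ '' (Wa (n + 2)).1) := fun n => (seq n).2.2
    -- multi-step differences
    have hx_diff : ∀ k n, x (n + k) - x n ∈ (Wa (n + 1)).1 := by
      intro k
      induction k with
      | zero => intro n; simpa using hWa_zero (n + 1)
      | succ k ih =>
        intro n
        have h1 : x (n + 1 + k) - x (n + 1) ∈ (Wa (n + 2)).1 := ih (n + 1)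
        have h2 : x (n + 1) - x n ∈ (Wa (n + 2)).1 := hx_inc n
        have h3 := hWa_add (n + 1) _ h1 _ h2
        have h4 : x (n + 1 + k) - x (n + 1) + (x (n + 1) - x n) = x (n + (k + 1)) - x n := by
          have hnk : n + 1 + k = n + (k + 1) := by omega
          rw [hnk]; abel
        exact h4 ▸ h3
    have hx_diff' : ∀ {i j : ℕ}, i ≤ j → x j - x i ∈ (Wa (i + 1)).1 := by
      intro i j hij
      obtain ⟨k, rfl⟩ := Nat.exists_eq_add_of_le hij
      exact hx_diff k i
    -- the sequence is Cauchy
    have hcauchy : CauchySeq x := by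
      apply cauchySeq_of_controlled (fun n => {p : M × M | p.2 - p.1 ∈ (Wa (n + 1)).1})
      · intro s hs
        rw [uniformity_eq_comap_nhds_zero M, Filter.mem_comap] at hs
        obtain ⟨T, hT, hTs⟩ := hs
        obtain ⟨k, -, hk⟩ := hb.toHasBasis.mem_iff.1 hT
        exact ⟨k, fun p hp => hTs (hk ((hWa_basis k) hp))⟩
      · intro K m n hm hn
        show x n - x m ∈ (Wa (K + 1)).1
        rcases le_total m n with h | h
        · exact hWa_anti (Nat.succ_le_succ hm) (hx_diff' h)
        · have := hWa_neg K _ (hWa_anti (Nat.succ_le_succ hn) (hx_diff' h))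
          simpa using this
    obtain ⟨ξ, hξ⟩ := cauchySeq_tendsto_of_complete hcauchy
    -- the limit maps to y
    have hzlim : Tendsto (fun n => y - φ (x n)) atTop (𝓝 (y - φ ξ)) :=
      tendsto_const_nhds.sub ((hφ.tendsto ξ).comp hξ)
    have hyξ : y - φ ξ = 0 := by
      by_contra hne
      have h1 : {y - φ ξ}ᶜ ∈ 𝓝 (0 : N) :=
        compl_singleton_mem_nhds (fun h => hne h.symm)
      obtain ⟨Q, ⟨hQ_mem, hQ_closed⟩, hQ_sub⟩ := (closed_nhds_basis (0 : N)).mem_iff.1 h1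
      have hQpre : φ ⁻¹' Q ∈ 𝓝 (0 : M) := by
        have := hφ.tendsto 0
        rw [map_zero] at this
        exact this hQ_mem
      obtain ⟨k, -, hk⟩ := hb.toHasBasis.mem_iff.1 hQpre
      have hev : ∀ n, k ≤ n → y - φ (x n) ∈ Q := by
        intro n hkn
        have h2 : (Wa (n + 2)).1 ⊆ b k := (hWa_basis (n + 1)).trans (hb.antitone (by omega))
        have h3 : closure (φ '' (Wa (n + 2)).1) ⊆ Q := by
          rw [← hQ_closed.closure_eq]
          exact closure_mono ((Set.image_mono h2).trans (Set.image_subset_iff.2 hk))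
        exact h3 (hx_rem n)
      have hQξ : y - φ ξ ∈ Q :=
        hQ_closed.mem_of_tendsto hzlim (Filter.eventually_atTop.2 ⟨k, hev⟩)
      exact (hQ_sub hQξ) rfl
    exact ⟨ξ, (sub_eq_zero.1 hyξ).symm⟩
  exact Filter.mem_of_superset (hcl 1) hkey

/-- If `φ : M → N` is a continuous homomorphism of Polish Abelian groups and the quotient
`N ⧸ φ(M)` is countable, then the image of `φ` is open and closed in `N`, and the quotient
(with its quotient topology) is discrete. -/
theorem open_closed_image_of_countable_quotient
    (M N : Type*) [AddCommGroup M] [TopologicalSpace M] [IsTopologicalAddGroup M] [PolishSpace M]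
    [AddCommGroup N] [TopologicalSpace N] [IsTopologicalAddGroup N] [PolishSpace N]
    (φ : M →+ N) (hφ : Continuous φ)
    (hcount : Countable (N ⧸ φ.range)) :
    IsOpen (Set.range φ) ∧ IsClosed (Set.range φ) ∧ DiscreteTopology (N ⧸ φ.range) := by
  have hmem : (φ.range : Set N) ∈ 𝓝 (0 : N) := by
    rw [AddMonoidHom.coe_range]
    exact aux_range_mem_nhds φ hφ hcount
  have hopen : IsOpen (φ.range : Set N) := AddSubgroup.isOpen_of_mem_nhds φ.range hmem
  have hclosed : IsClosed (φ.range : Set N) := AddSubgroup.isClosed_of_isOpen _ hopen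
  have hdis : DiscreteTopology (N ⧸ φ.range) := QuotientAddGroup.discreteTopology hopen
  rw [AddMonoidHom.coe_range] at hopen hclosed
  exact ⟨hopen, hclosed, hdis⟩
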